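/- arXiv:1305.4816 — 3 statements merged into one kernel-verified Lean document; each statement's English description precedes it below -/
import Mathlib

section
/- Let S = 1 + ∑_{n≥1} Catalan(n-1) zⁿ ∈ ℚ[[z]]. For all integers p ≥ 1 and s ≥ 1, the coefficient of z^s in S^p satisfies s · [z^s] S^p = p · ∑_{ℓ=0}^{min(p-1, s-1)} C(p-1, ℓ) · C(2s-2-ℓ, s-1). -/
open PowerSeries Finset

noncomputable def Mser : PowerSeries ℚ :=
  PowerSeries.mk fun n => if n = 0 then 0 else (catalan (n - 1) : ℚ)

lemma coeff_Mser (n : ℕ) :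
    PowerSeries.coeff n Mser = if n = 0 then 0 else (catalan (n - 1) : ℚ) :=
  PowerSeries.coeff_mk _ _

lemma Mser_sq : Mser * Mser = Mser - PowerSeries.X := by
  ext n
  rw [map_sub, PowerSeries.coeff_mul,
    Finset.Nat.sum_antidiagonal_eq_sum_range_succ_mk]
  match n with
  | 0 => simp [coeff_Mser]
  | 1 => simp [coeff_Mser, Finset.sum_range_succ]
  | (n+2) =>
    have hcat : (catalan (n + 1) : ℚ) = ∑ k ∈ Finset.range (n+1), (catalan k : ℚ) * catalan (n - k) := by
      rw [catalan_succ' n, Finset.Nat.sum_antidiagonal_eq_sum_range_succ_mk]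
      push_cast
      rfl
    calc ∑ k ∈ Finset.range (n + 2 + 1),
          PowerSeries.coeff k Mser * PowerSeries.coeff (n + 2 - k) Mser
        = ∑ k ∈ Finset.range (n + 2),
            PowerSeries.coeff k Mser * PowerSeries.coeff (n + 2 - k) Mser + 0 := by
          rw [Finset.sum_range_succ]
          simp [coeff_Mser]
      _ = ∑ k ∈ Finset.range (n + 1),
            PowerSeries.coeff (k+1) Mser * PowerSeries.coeff (n + 2 - (k+1)) Mser := by
          rw [add_zero, Finset.sum_range_succ']
          simp [coeff_Mser]
      _ = ∑ k ∈ Finset.range (n + 1), (catalan k : ℚ) * catalan (n - k) := by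
          refine Finset.sum_congr rfl fun k hk => ?_
          simp only [Finset.mem_range] at hk
          rw [coeff_Mser, coeff_Mser, if_neg (by omega), if_neg (by omega),
            show k + 1 - 1 = k by omega, show n + 2 - (k+1) - 1 = n - k by omega]
      _ = PowerSeries.coeff (n+2) Mser - PowerSeries.coeff (n+2) PowerSeries.X := by
          rw [coeff_Mser, PowerSeries.coeff_X, if_neg (by omega),
            if_neg (by omega : ¬ (n+2 = 1)), show n + 2 - 1 = n + 1 by omega, hcat, sub_zero]


lemma coeff_DM (n : ℕ) :
    PowerSeries.coeff n (PowerSeries.derivative ℚ Mser) = ((2*n).choose n : ℚ) := by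
  rw [PowerSeries.coeff_derivative, coeff_Mser, if_neg n.succ_ne_zero,
    show n + 1 - 1 = n from rfl]
  have h := succ_mul_catalan_eq_centralBinom n
  rw [Nat.centralBinom_eq_two_mul_choose] at h
  rw [← h]
  push_cast
  ring

lemma two_mul_M_DM :
    Mser * PowerSeries.derivative ℚ Mser + Mser * PowerSeries.derivative ℚ Mser
      = PowerSeries.derivative ℚ Mser - 1 := by
  have h := congrArg (PowerSeries.derivative ℚ) Mser_sq
  rw [Derivation.leibniz, map_sub, PowerSeries.derivative_X] at h
  simp only [smul_eq_mul] at h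
  exact h

lemma choose_two_mul_eq (m : ℕ) :
    ((2*(m+1)).choose (m+1) : ℚ) = 2 * ((2*(m+1)-1).choose (m+1) : ℚ) := by
  have h1 : 2*(m+1) = (2*m+1)+1 := by omega
  have h2 : 2*(m+1)-1 = 2*m+1 := by omega
  rw [h2, h1, Nat.choose_succ_succ, Nat.choose_symm_half]
  push_cast
  ring

lemma key (ℓ : ℕ) : ∀ n : ℕ,
    PowerSeries.coeff n (PowerSeries.derivative ℚ Mser * Mser ^ ℓ) =
      if ℓ ≤ n then ((2*n - ℓ).choose n : ℚ) else 0 := by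
  induction ℓ using Nat.strong_induction_on with
  | _ ℓ ih =>
    match ℓ with
    | 0 => intro n; simp [coeff_DM]
    | 1 =>
      intro n
      have h : PowerSeries.coeff n (Mser * PowerSeries.derivative ℚ Mser)
            + PowerSeries.coeff n (Mser * PowerSeries.derivative ℚ Mser)
          = PowerSeries.coeff n (PowerSeries.derivative ℚ Mser) - PowerSeries.coeff n 1 := by
        rw [← map_add, ← map_sub, two_mul_M_DM]
      rw [show PowerSeries.derivative ℚ Mser * Mser ^ 1 = Mser * PowerSeries.derivative ℚ Mser by
        ring]
      match n with
      | 0 =>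
        rw [if_neg (by omega)]
        have h0 : PowerSeries.constantCoeff Mser = 0 := by
          simpa using coeff_Mser 0
        rw [PowerSeries.coeff_zero_eq_constantCoeff, map_mul, h0, zero_mul]
      | (m+1) =>
        rw [if_pos (by omega)]
        rw [coeff_DM, PowerSeries.coeff_one, if_neg (by omega), sub_zero] at h
        rw [show 2*(m+1) - 1 = 2*m+1 by omega] at *
        have h2 := choose_two_mul_eq m
        rw [show 2*(m+1) - 1 = 2*m+1 by omega] at h2
        linarith
    | (ℓ+2) =>
      intro n
      have hpow : PowerSeries.derivative ℚ Mser * Mser ^ (ℓ+2)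
          = PowerSeries.derivative ℚ Mser * Mser ^ (ℓ+1)
            - PowerSeries.X * (PowerSeries.derivative ℚ Mser * Mser ^ ℓ) := by
        have h2 : PowerSeries.derivative ℚ Mser * Mser ^ (ℓ+2)
            = (Mser * Mser) * (PowerSeries.derivative ℚ Mser * Mser ^ ℓ) := by ring
        rw [h2, Mser_sq]; ring
      rw [hpow, map_sub, ih (ℓ+1) (by omega) n]
      match n with
      | 0 =>
        rw [if_neg (by omega), if_neg (by omega)]
        simp
      | (m+1) =>
        rw [PowerSeries.coeff_succ_X_mul, ih ℓ (by omega) m]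
        rcases lt_trichotomy ℓ m with hc | hc | hc
        · rw [if_pos (by omega), if_pos (by omega), if_pos (by omega)]
          have e1 : 2*(m+1) - (ℓ+1) = (2*m - ℓ) + 1 := by omega
          have e2 : 2*(m+1) - (ℓ+2) = 2*m - ℓ := by omega
          have e3 : (2*m - ℓ + 1).choose (m+1) = (2*m-ℓ).choose m + (2*m-ℓ).choose (m+1) :=
            Nat.choose_succ_succ _ _
          rw [e1, e2, e3]
          push_cast
          ring
        · rw [if_pos (by omega), if_pos (by omega), if_neg (by omega),
            show 2*(m+1) - (ℓ+1) = m+1 by omega, show 2*m - ℓ = m by omega,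
            Nat.choose_self, Nat.choose_self]
          norm_num
        · rw [if_neg (by omega), if_neg (by omega), if_neg (by omega)]
          norm_num

theorem coeff_S_pow (S : PowerSeries ℚ)
    (hS : S = 1 + PowerSeries.mk fun n => if n = 0 then 0 else (catalan (n - 1) : ℚ))
    (p s : ℕ) (hp : 1 ≤ p) (hs : 1 ≤ s) :
    (s : ℚ) * PowerSeries.coeff s (S ^ p) =
      (p : ℚ) * ∑ ℓ ∈ Finset.range (min (p - 1) (s - 1) + 1),
        (Nat.choose (p - 1) ℓ : ℚ) * (Nat.choose (2 * s - 2 - ℓ) (s - 1) : ℚ) := by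
  obtain ⟨t, rfl⟩ : ∃ t, s = t + 1 := ⟨s - 1, by omega⟩
  have hSM : S = 1 + Mser := hS
  have hDS : PowerSeries.derivative ℚ S = PowerSeries.derivative ℚ Mser := by
    rw [hSM, map_add]
    simp
  -- binomial expansion of S^(p-1)
  have hbin : S ^ (p-1) = ∑ ℓ ∈ Finset.range p, ((p-1).choose ℓ : ℚ) • Mser ^ ℓ := by
    rw [hSM, add_comm (1 : PowerSeries ℚ) Mser, add_pow,
      show p - 1 + 1 = p by omega]
    refine Finset.sum_congr rfl fun ℓ _ => ?_
    rw [one_pow, mul_one, Nat.cast_smul_eq_nsmul ℚ, nsmul_eq_mul]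
    exact mul_comm _ _
  -- derivative of S^p
  have hDpow : PowerSeries.derivative ℚ (S ^ p) =
      (p : ℚ) • ∑ ℓ ∈ Finset.range p,
        ((p-1).choose ℓ : ℚ) • (PowerSeries.derivative ℚ Mser * Mser ^ ℓ) := by
    rw [Derivation.leibniz_pow, hDS, ← Nat.cast_smul_eq_nsmul ℚ, smul_eq_mul, hbin]
    congr 1
    rw [Finset.sum_mul]
    refine Finset.sum_congr rfl fun ℓ _ => ?_
    rw [smul_mul_assoc, mul_comm]
  have h1 : ((t:ℚ) + 1) * PowerSeries.coeff (t+1) (S ^ p)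
      = PowerSeries.coeff t (PowerSeries.derivative ℚ (S ^ p)) := by
    rw [PowerSeries.coeff_derivative]
    push_cast
    ring
  push_cast
  rw [h1, hDpow, map_smul, map_sum, smul_eq_mul]
  congr 1
  have hsimp : ∀ ℓ : ℕ,
      PowerSeries.coeff t (((p-1).choose ℓ : ℚ) • (PowerSeries.derivative ℚ Mser * Mser ^ ℓ))
        = ((p-1).choose ℓ : ℚ) * (if ℓ ≤ t then ((2*t - ℓ).choose t : ℚ) else 0) := by
    intro ℓ
    rw [map_smul, smul_eq_mul, key]
  rw [Finset.sum_congr rfl fun ℓ _ => hsimp ℓ]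
  rw [← Finset.sum_subset
      (Finset.range_subset_range.mpr (by omega : min (p-1) (t+1-1) + 1 ≤ p))]
  · refine Finset.sum_congr rfl fun ℓ hℓ => ?_
    simp only [Finset.mem_range] at hℓ
    rw [if_pos (by omega : ℓ ≤ t), show 2*(t+1) - 2 - ℓ = 2*t - ℓ by omega]
  · intro x hx hx'
    simp only [Finset.mem_range] at hx hx'
    by_cases hxt : x ≤ t
    · rw [if_pos hxt, Nat.choose_eq_zero_of_lt (by omega), Nat.cast_zero, zero_mul]
    · rw [if_neg hxt, mul_zero]
end

section
/- Let R be a formal power series over a commutative ℚ-algebra, a, c positive integers, and n ≥ 0 an integer. Then (a+c) · ∑_{p=1}^{n+1} C(n, p-1) · D^p(R^a) · D^{n+1-p}(R^c) = a · D^{n+1}(R^{a+c}), where D^k denotes the k-th iterated formal derivative. -/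
open Finset PowerSeries

private theorem ps_derivative_mul {A : Type*} [CommRing A] (f g : PowerSeries A) :
    PowerSeries.derivative A (f * g) =
      PowerSeries.derivative A f * g + f * PowerSeries.derivative A g := by
  rw [Derivation.leibniz]
  simp [smul_eq_mul]
  ring

private theorem ps_iterate_smul {A : Type*} [CommRing A] (m n : ℕ) (f : PowerSeries A) :
    (⇑(PowerSeries.derivative A))^[n] (m • f) =
      m • (⇑(PowerSeries.derivative A))^[n] f := by
  induction n generalizing f with
  | zero => simp
  | succ n ih => rw [Function.iterate_succ_apply, map_nsmul, ih, ← Function.iterate_succ_apply]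

private theorem ps_iterate_derivative_mul {A : Type*} [CommRing A] {n : ℕ}
    (p q : PowerSeries A) :
    (⇑(PowerSeries.derivative A))^[n] (p * q) =
      ∑ k ∈ range n.succ, (n.choose k •
        ((⇑(PowerSeries.derivative A))^[n - k] p * (⇑(PowerSeries.derivative A))^[k] q)) := by
  set D := ⇑(PowerSeries.derivative A) with hD
  induction n with
  | zero => simp [Finset.range]
  | succ n IH =>
    calc
      D^[n + 1] (p * q) =
          D^[1] (∑ k ∈ range n.succ, n.choose k • (D^[n - k] p * D^[k] q)) := by
        rw [Function.iterate_succ_apply', IH]; rfl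
      _ = (∑ k ∈ range n.succ, n.choose k • (D^[n - k + 1] p * D^[k] q)) +
          ∑ k ∈ range n.succ, n.choose k • (D^[n - k] p * D^[k + 1] q) := by
        rw [hD]
        simp only [Function.iterate_one, map_sum, map_nsmul, ps_derivative_mul,
          smul_add, sum_add_distrib, ← Function.iterate_succ_apply']
      _ = (∑ k ∈ range n.succ, n.choose k.succ • (D^[n - k] p * D^[k + 1] q)) +
              1 • (D^[n + 1] p * D^[0] q) +
            ∑ k ∈ range n.succ, n.choose k • (D^[n - k] p * D^[k + 1] q) := ?_
      _ = ((∑ k ∈ range n.succ, n.choose k • (D^[n - k] p * D^[k + 1] q)) +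
              ∑ k ∈ range n.succ, n.choose k.succ • (D^[n - k] p * D^[k + 1] q)) +
            1 • (D^[n + 1] p * D^[0] q) := by
        rw [add_comm, add_assoc]
      _ = (∑ i ∈ range n.succ,
              (n + 1).choose (i + 1) • (D^[n + 1 - (i + 1)] p * D^[i + 1] q)) +
            1 • (D^[n + 1] p * D^[0] q) := by
        simp_rw [Nat.choose_succ_succ, Nat.succ_sub_succ, add_smul, sum_add_distrib]
      _ = ∑ k ∈ range n.succ.succ, n.succ.choose k • (D^[n.succ - k] p * D^[k] q) := by
        rw [sum_range_succ' _ n.succ, Nat.choose_zero_right, tsub_zero]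
    congr
    refine (sum_range_succ' _ _).trans (congr_arg₂ (· + ·) ?_ ?_)
    · rw [sum_range_succ, Nat.choose_succ_self, zero_smul, add_zero]
      refine sum_congr rfl fun k hk => ?_
      rw [mem_range] at hk
      congr
      omega
    · rw [Nat.choose_zero_right, tsub_zero]

private theorem ps_base {A : Type*} [CommRing A] (R : PowerSeries A) (a c : ℕ)
    (ha : 1 ≤ a) (hc : 1 ≤ c) :
    (a + c) • (PowerSeries.derivative A (R ^ a) * R ^ c) =
      a • PowerSeries.derivative A (R ^ (a + c)) := by
  rw [Derivation.leibniz_pow, Derivation.leibniz_pow]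
  have h : R ^ (a + c - 1) = R ^ (a - 1) * R ^ c := by
    rw [← pow_add]; congr 1; omega
  simp only [smul_eq_mul, nsmul_eq_mul, Nat.cast_add]
  rw [h]; ring

theorem iterated_deriv_pow_identity (A : Type*) [CommRing A] [Algebra ℚ A]
    (R : PowerSeries A) (a c n : ℕ) (ha : 1 ≤ a) (hc : 1 ≤ c) :
    (a + c) • ∑ p ∈ Finset.Icc 1 (n + 1),
        (Nat.choose n (p - 1)) •
          ((⇑(PowerSeries.derivative A))^[p] (R ^ a) *
            (⇑(PowerSeries.derivative A))^[n + 1 - p] (R ^ c)) =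
      a • (⇑(PowerSeries.derivative A))^[n + 1] (R ^ (a + c)) := by
  set D := ⇑(PowerSeries.derivative A) with hD
  have hsum : ∑ p ∈ Finset.Icc 1 (n + 1),
      (Nat.choose n (p - 1)) • (D^[p] (R ^ a) * D^[n + 1 - p] (R ^ c)) =
      D^[n] (R ^ c * D (R ^ a)) := by
    rw [← Finset.Ico_add_one_right_eq_Icc, Finset.sum_Ico_eq_sum_range]
    have : n + 1 + 1 - 1 = n + 1 := by omega
    rw [this, hD, ps_iterate_derivative_mul]
    refine Finset.sum_congr rfl fun k hk => ?_
    rw [Finset.mem_range] at hk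
    have h1 : 1 + k - 1 = k := by omega
    have h2 : n + 1 - (1 + k) = n - k := by omega
    rw [h1, h2, mul_comm, add_comm 1 k, Function.iterate_succ_apply]
  rw [hsum, mul_comm, ← ps_iterate_smul, ps_base R a c ha hc, ps_iterate_smul,
    ← Function.iterate_succ_apply]
end

section
/- Define a(q) = (6/q) · ∑_{ℓ=0}^{min(5, q-1)} C(5, ℓ) · C(2q-2-ℓ, q-1) for integers q ≥ 1. Then q divides 6·∑_{ℓ=0}^{min(5,q-1)} C(5,ℓ)·C(2q-2-ℓ, q-1), and a(1) = 6, a(2) = 21, a(3) = 62, a(4) = 180, a(5) = 540. -/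
def hexSquareSum (q : ℕ) : ℕ :=
  ∑ ℓ ∈ Finset.range (min 5 (q - 1) + 1),
    Nat.choose 5 ℓ * Nat.choose (2 * q - 2 - ℓ) (q - 1)

def hexSquareCount (q : ℕ) : ℕ := 6 * hexSquareSum q / q

lemma hexSquare_term_dvd (q ℓ : ℕ) (h : ℓ + 1 ≤ q) :
    q ∣ 6 * (Nat.choose 5 ℓ * Nat.choose (2 * q - 2 - ℓ) (q - 1)) := by
  set n := 2 * q - 2 - ℓ with hn
  have hq : q - 1 + 1 = q := by omega
  have h1 : Nat.choose n (q - 1 + 1) * (q - 1 + 1) =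
      Nat.choose n (q - 1) * (n - (q - 1)) := Nat.choose_succ_right_eq n (q - 1)
  rw [hq] at h1
  have hsub : n - (q - 1) = q - 1 - ℓ := by omega
  rw [hsub] at h1
  -- key: (ℓ+1) * C(n, q-1) + q * C(n, q) = q * C(n, q-1)
  have hkey : (ℓ + 1) * Nat.choose n (q - 1) + q * Nat.choose n q
      = q * Nat.choose n (q - 1) := by
    have h1' : q * Nat.choose n q = (q - 1 - ℓ) * Nat.choose n (q - 1) := by
      rw [mul_comm q (Nat.choose n q), h1, mul_comm]
    rw [h1', ← add_mul]
    congr 1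
    omega
  have hdvd : q ∣ (ℓ + 1) * Nat.choose n (q - 1) := by
    have : (ℓ + 1) * Nat.choose n (q - 1)
        = q * Nat.choose n (q - 1) - q * Nat.choose n q := by omega
    rw [this]
    exact Nat.dvd_sub (Dvd.intro _ rfl) (Dvd.intro _ rfl)
  have h6 : 6 * (Nat.choose 5 ℓ * Nat.choose n (q - 1))
      = Nat.choose 6 (ℓ + 1) * ((ℓ + 1) * Nat.choose n (q - 1)) := by
    have := Nat.add_one_mul_choose_eq 5 ℓ
    -- Nat.succ 5 * Nat.choose 5 ℓ = Nat.choose 6 (ℓ+1) * Nat.succ ℓ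
    calc 6 * (Nat.choose 5 ℓ * Nat.choose n (q - 1))
        = (6 * Nat.choose 5 ℓ) * Nat.choose n (q - 1) := by ring
      _ = (Nat.choose 6 (ℓ + 1) * (ℓ + 1)) * Nat.choose n (q - 1) := by
          rw [show (6 : ℕ) * Nat.choose 5 ℓ = Nat.choose 6 (ℓ + 1) * (ℓ + 1) from this]
      _ = Nat.choose 6 (ℓ + 1) * ((ℓ + 1) * Nat.choose n (q - 1)) := by ring
  rw [h6]
  exact hdvd.mul_left _

theorem hexSquare_values :
    (∀ q : ℕ, 1 ≤ q → q ∣ 6 * hexSquareSum q) ∧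
    hexSquareCount 1 = 6 ∧ hexSquareCount 2 = 21 ∧ hexSquareCount 3 = 62 ∧
    hexSquareCount 4 = 180 ∧ hexSquareCount 5 = 540 := by
  refine ⟨?_, by decide +kernel, by decide +kernel, by decide +kernel, by decide +kernel, by decide +kernel⟩
  intro q hq
  unfold hexSquareSum
  rw [Finset.mul_sum]
  refine Finset.dvd_sum ?_
  intro ℓ hℓ
  have : ℓ + 1 ≤ q := by
    have := Finset.mem_range.mp hℓ
    omega
  exact hexSquare_term_dvd q ℓ this
end
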